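/- Let Z_n = E[1{θ₁ ≤ n < θ₂} | F_n] where (F_n) is a filtration and θ₁ ≤ θ₂ are ℕ-valued random variables. Then lim_{n→∞} Z_n = 0 almost surely. -/

import Mathlib

open Filter MeasureTheory
open scoped Topology

theorem condexp_indicator_between_tendsto_zero {Ω : Type*} {m0 : MeasurableSpace Ω}
    (μ : Measure Ω) [IsProbabilityMeasure μ] (ℱ : Filtration ℕ m0)
    (θ₁ θ₂ : Ω → ℕ) (hθ₁ : Measurable θ₁) (hθ₂ : Measurable θ₂)
    (hle : ∀ ω, θ₁ ω ≤ θ₂ ω) :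
    ∀ᵐ ω ∂μ, Tendsto
      (fun n => (μ[fun ω' => if θ₁ ω' ≤ n ∧ n < θ₂ ω' then (1 : ℝ) else 0 | ℱ n]) ω)
      atTop (nhds 0) := by
  have hm'le : (⨆ n, ℱ n) ≤ m0 := iSup_le fun n => ℱ.le n
  set f : ℕ → Ω → ℝ := fun n ω' => if θ₁ ω' ≤ n ∧ n < θ₂ ω' then 1 else 0 with hfdef
  set u : ℕ → Ω → ℝ := fun k ω' => if k < θ₂ ω' then 1 else 0 with hudef
  have hfmeas : ∀ n, Measurable (f n) := by
    intro n
    exact Measurable.ite ((hθ₁ measurableSet_Iic).inter (hθ₂ measurableSet_Ioi))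
      measurable_const measurable_const
  have humeas : ∀ k, Measurable (u k) := by
    intro k
    exact Measurable.ite (hθ₂ measurableSet_Ioi) measurable_const measurable_const
  have hbnd : ∀ (p : Prop) [Decidable p], ‖(if p then (1:ℝ) else 0)‖ ≤ 1 := by
    intro p _; split <;> simp
  have hfint : ∀ n, Integrable (f n) μ := fun n =>
    (integrable_const (1:ℝ)).mono' (hfmeas n).aestronglyMeasurable
      (ae_of_all _ fun ω => hbnd _)
  have huint : ∀ k, Integrable (u k) μ := fun k =>
    (integrable_const (1:ℝ)).mono' (humeas k).aestronglyMeasurable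
      (ae_of_all _ fun ω => hbnd _)
  set g : ℕ → Ω → ℝ := fun k => μ[u k | ⨆ n, ℱ n] with hgdef
  -- A : f n ≤ u k pointwise for k ≤ n, hence condexp comparison
  have hA : ∀ k n, k ≤ n → μ[f n|ℱ n] ≤ᵐ[μ] μ[u k|ℱ n] := by
    intro k n hkn
    refine condExp_mono (hfint n) (huint k) (ae_of_all _ fun ω => ?_)
    simp only [hfdef, hudef]
    split
    · next h => rw [if_pos (lt_of_le_of_lt hkn h.2)]
    · split <;> norm_num
  -- B : Lévy upward
  have hB : ∀ k, ∀ᵐ ω ∂μ, Tendsto (fun n => (μ[u k|ℱ n]) ω) atTop (𝓝 (g k ω)) :=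
    fun k => tendsto_ae_condExp (u k)
  -- C : nonnegativity
  have hC : ∀ n, 0 ≤ᵐ[μ] μ[f n|ℱ n] := fun n =>
    condExp_nonneg (ae_of_all _ fun ω => by simp only [hfdef]; split <;> norm_num)
  -- D : g k → 0 a.e.
  have hg_nonneg : ∀ k, 0 ≤ᵐ[μ] g k := fun k =>
    condExp_nonneg (ae_of_all _ fun ω => by simp only [hudef]; split <;> norm_num)
  have hg_le_one : ∀ k, g k ≤ᵐ[μ] fun _ => (1:ℝ) := by
    intro k
    have : μ[fun _ => (1:ℝ)|⨆ n, ℱ n] = fun _ => (1:ℝ) := condExp_const hm'le 1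
    calc g k ≤ᵐ[μ] μ[fun _ => (1:ℝ)|⨆ n, ℱ n] :=
          condExp_mono (huint k) (integrable_const 1)
            (ae_of_all _ fun ω => by simp only [hudef]; split <;> norm_num)
      _ =ᵐ[μ] fun _ => (1:ℝ) := by rw [this]
  have hg_anti : ∀ k, g (k+1) ≤ᵐ[μ] g k := by
    intro k
    refine condExp_mono (huint (k+1)) (huint k) (ae_of_all _ fun ω => ?_)
    simp only [hudef]
    split
    · next h => rw [if_pos (lt_of_le_of_lt (Nat.le_succ k) h)]
    · split <;> norm_num
  set L : Ω → ℝ := fun ω => ⨅ k, g k ω with hLdef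
  have hae : ∀ᵐ ω ∂μ, (∀ k, 0 ≤ g k ω) ∧ (∀ k, g (k+1) ω ≤ g k ω) ∧ (∀ k, g k ω ≤ 1) := by
    rw [eventually_and, eventually_and, ae_all_iff, ae_all_iff, ae_all_iff]
    exact ⟨hg_nonneg, hg_anti, hg_le_one⟩
  have hL_tendsto : ∀ᵐ ω ∂μ, Tendsto (fun k => g k ω) atTop (𝓝 (L ω)) := by
    filter_upwards [hae] with ω ⟨h0, hanti, _⟩
    exact tendsto_atTop_ciInf (antitone_nat_of_succ_le hanti)
      ⟨0, fun x ⟨k, hk⟩ => hk ▸ h0 k⟩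
  have hgmeasae : ∀ k, AEStronglyMeasurable (g k) μ := fun k =>
    (stronglyMeasurable_condExp.mono hm'le).aestronglyMeasurable
  -- integral of u k tends to 0
  have hSmeas : ∀ k, MeasurableSet {ω | k < θ₂ ω} := fun k => hθ₂ measurableSet_Ioi
  have hmeas0 : Tendsto (fun k => μ {ω | k < θ₂ ω}) atTop (𝓝 0) := by
    have h1 : Tendsto (fun k => μ {ω | k < θ₂ ω}) atTop (𝓝 (μ (⋂ k, {ω | k < θ₂ ω}))) :=
      tendsto_measure_iInter_atTop (fun k => (hSmeas k).nullMeasurableSet)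
        (fun i j hij => fun ω hω => lt_of_le_of_lt hij hω)
        ⟨0, measure_ne_top μ _⟩
    have h2 : (⋂ k, {ω | k < θ₂ ω}) = ∅ := by
      ext ω
      simp only [Set.mem_iInter, Set.mem_setOf_eq, Set.mem_empty_iff_false, iff_false, not_forall]
      exact ⟨θ₂ ω, lt_irrefl _⟩
    rwa [h2, measure_empty] at h1
  have hintu : ∀ k, ∫ ω, u k ω ∂μ = (μ {ω | k < θ₂ ω}).toReal := by
    intro k
    have : u k = Set.indicator {ω | k < θ₂ ω} (fun _ => (1:ℝ)) := by
      funext ω; simp only [hudef, Set.indicator_apply, Set.mem_setOf_eq]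
    rw [this, integral_indicator_const _ (hSmeas k)]
    simp
    rfl
  have hintu0 : Tendsto (fun k => ∫ ω, u k ω ∂μ) atTop (𝓝 0) := by
    simp only [hintu]
    have := (ENNReal.tendsto_toReal (by norm_num : (0:ENNReal) ≠ ⊤)).comp hmeas0
    simpa [Function.comp_def] using this
  have hintg : ∀ k, ∫ ω, g k ω ∂μ = ∫ ω, u k ω ∂μ := fun k =>
    integral_condExp hm'le
  have hintL : Tendsto (fun k => ∫ ω, g k ω ∂μ) atTop (𝓝 (∫ ω, L ω ∂μ)) := by
    refine tendsto_integral_of_dominated_convergence (fun _ => (1:ℝ)) hgmeasae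
      (integrable_const 1) (fun k => ?_) hL_tendsto
    filter_upwards [hg_nonneg k, hg_le_one k] with ω h0 h1
    simp only [Pi.zero_apply] at h0
    rw [Real.norm_eq_abs, abs_le]
    exact ⟨by linarith, h1⟩
  have hintL0 : ∫ ω, L ω ∂μ = 0 := by
    have : Tendsto (fun k => ∫ ω, g k ω ∂μ) atTop (𝓝 0) := by
      simpa only [hintg] using hintu0
    exact tendsto_nhds_unique hintL this
  have hL_nonneg : 0 ≤ᵐ[μ] L := by
    filter_upwards [hae] with ω ⟨h0, _, _⟩
    exact le_ciInf h0
  have hL_int : Integrable L μ := by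
    refine (integrable_const (1:ℝ)).mono'
      (aestronglyMeasurable_of_tendsto_ae atTop hgmeasae hL_tendsto) ?_
    filter_upwards [hae] with ω ⟨h0, _, h1⟩
    rw [Real.norm_eq_abs, abs_le]
    constructor
    · linarith [le_ciInf h0 (α := ℝ)]
    · exact le_trans (ciInf_le ⟨0, fun x ⟨k, hk⟩ => hk ▸ h0 k⟩ 0) (h1 0)
  have hL_zero : L =ᵐ[μ] 0 := by
    rw [← integral_eq_zero_iff_of_nonneg_ae hL_nonneg hL_int]
    exact hintL0
  have hD : ∀ᵐ ω ∂μ, Tendsto (fun k => g k ω) atTop (𝓝 0) := by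
    filter_upwards [hL_tendsto, hL_zero] with ω ht hz
    rwa [hz] at ht
  -- Combine everything
  have hAall : ∀ᵐ ω ∂μ, ∀ k n, k ≤ n → (μ[f n|ℱ n]) ω ≤ (μ[u k|ℱ n]) ω := by
    rw [ae_all_iff]
    intro k
    rw [ae_all_iff]
    intro n
    by_cases hkn : k ≤ n
    · filter_upwards [hA k n hkn] with ω h
      exact fun _ => h
    · exact ae_of_all _ fun ω h => absurd h hkn
  have hBall : ∀ᵐ ω ∂μ, ∀ k, Tendsto (fun n => (μ[u k|ℱ n]) ω) atTop (𝓝 (g k ω)) :=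
    ae_all_iff.mpr hB
  have hCall : ∀ᵐ ω ∂μ, ∀ n, 0 ≤ (μ[f n|ℱ n]) ω := ae_all_iff.mpr hC
  filter_upwards [hAall, hBall, hCall, hD] with ω hA' hB' hC' hD'
  rw [Metric.tendsto_atTop]
  intro ε hε
  obtain ⟨k0, hk0⟩ := Metric.tendsto_atTop.mp hD' (ε/2) (by linarith)
  set k := k0 with hkdef
  have hgk : g k ω < ε/2 := by
    have := hk0 k0 le_rfl
    rw [Real.dist_eq, abs_lt] at this
    linarith [this.2]
  obtain ⟨N, hN⟩ := Metric.tendsto_atTop.mp (hB' k) (ε/2) (by linarith)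
  refine ⟨max N k, fun n hn => ?_⟩
  have hn1 : N ≤ n := le_trans (le_max_left _ _) hn
  have hn2 : k ≤ n := le_trans (le_max_right _ _) hn
  have h1 : (μ[u k|ℱ n]) ω < g k ω + ε/2 := by
    have := hN n hn1
    rw [Real.dist_eq, abs_lt] at this
    linarith [this.2]
  rw [Real.dist_eq, sub_zero, abs_of_nonneg (hC' n)]
  calc (μ[f n|ℱ n]) ω ≤ (μ[u k|ℱ n]) ω := hA' k n hn2
    _ < g k ω + ε/2 := h1
    _ < ε := by linarith
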